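/- Let U ⊂ ℝ be open, f, g : U → ℝ differentiable with f' and g' Lipschitz continuous with constants α and β respectively, and assume |f'(x) − g'(x)| ≥ γ > 0 for all x ∈ U. Suppose a sequence xₖ ⊂ U satisfies f(xₖ) + f'(xₖ)(x_{k+1} − xₖ) = g(x_{k+1}) and g(x_{k+1}) + g'(x_{k+1})(x_{k+2} − x_{k+1}) = f(x_{k+2}) for all k. Then with Δxₖ = x_{k+1} − xₖ, the inequalities |Δxₖ|·(1 − (β/2)|Δxₖ|) ≤ (α/(2γ))|Δx_{k−1}|² and |Δx_{k+1}|·(1 − (α/2)|Δx_{k+1}|) ≤ (β/(2γ))|Δxₖ|² hold (assuming the relevant segments lie in U). -/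

import Mathlib

lemma taylor_rem_bound {U : Set ℝ} (f f' : ℝ → ℝ) {c : ℝ} (hc : 0 ≤ c)
    (hf : ∀ x ∈ U, HasDerivAt f (f' x) x)
    (hLip : ∀ x ∈ U, ∀ y ∈ U, |f' x - f' y| ≤ c * |x - y|)
    {a b : ℝ} (hseg : Set.uIcc a b ⊆ U) :
    |f b - f a - f' a * (b - a)| ≤ c / 2 * (b - a) ^ 2 := by
  have hcont : ContinuousOn f' (Set.uIcc a b) := by
    apply LipschitzOnWith.continuousOn (K := c.toNNReal)
    rw [lipschitzOnWith_iff_dist_le_mul]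
    intro p hp q hq
    have := hLip p (hseg hp) q (hseg hq)
    simpa [Real.dist_eq, Real.coe_toNNReal c hc] using this
  have hint : IntervalIntegrable f' MeasureTheory.volume a b :=
    hcont.intervalIntegrable
  have hftc : ∫ t in a..b, f' t = f b - f a :=
    intervalIntegral.integral_eq_sub_of_hasDerivAt
      (fun t ht => hf t (hseg ht)) hint
  have hdiff : f b - f a - f' a * (b - a) = ∫ t in a..b, (f' t - f' a) := by
    rw [intervalIntegral.integral_sub hint intervalIntegrable_const, hftc,
      intervalIntegral.integral_const]
    simp; ring
  rw [hdiff]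
  have hbd : ‖∫ t in a..b, (f' t - f' a)‖ ≤ |∫ t in a..b, c * abs (t - a)| := by
    apply intervalIntegral.norm_integral_le_abs_of_norm_le
    · filter_upwards [MeasureTheory.ae_restrict_mem measurableSet_uIoc] with t ht
      have ht' : t ∈ Set.uIcc a b := Set.uIoc_subset_uIcc ht
      simpa [Real.norm_eq_abs] using hLip t (hseg ht') a (hseg Set.left_mem_uIcc)
    · exact (continuous_const.mul (continuous_id.sub continuous_const).abs).intervalIntegrable a b
  have hid : ∫ t in a..b, (t - a) = (b - a) ^ 2 / 2 := by
    rw [intervalIntegral.integral_sub (continuous_id'.intervalIntegrable a b) intervalIntegrable_const,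
      integral_id, intervalIntegral.integral_const]
    simp; ring
  have hval : |∫ t in a..b, c * abs (t - a)| ≤ c / 2 * (b - a) ^ 2 := by
    rcases le_total a b with hab | hab
    · have : ∫ t in a..b, c * abs (t - a) = ∫ t in a..b, c * (t - a) := by
        apply intervalIntegral.integral_congr
        intro t ht
        rw [Set.uIcc_of_le hab] at ht
        simp [abs_of_nonneg (sub_nonneg.2 ht.1)]
      rw [this, intervalIntegral.integral_const_mul, hid]
      rw [abs_of_nonneg (by positivity)]; ring_nf; nlinarith [sq_nonneg (b-a)]
    · have : ∫ t in a..b, c * abs (t - a) = ∫ t in a..b, c * (a - t) := by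
        apply intervalIntegral.integral_congr
        intro t ht
        rw [Set.uIcc_of_ge hab] at ht
        simp [abs_of_nonpos (sub_nonpos.2 ht.2), neg_sub]
      rw [this]
      have : ∫ t in a..b, c * (a - t) = - (c * ((b-a)^2/2)) := by
        rw [show (fun t => c * (a - t)) = (fun t => -(c * (t - a))) from by funext t; ring]
        rw [intervalIntegral.integral_neg, intervalIntegral.integral_const_mul, hid]
      rw [this, abs_neg, abs_of_nonneg (by positivity)]; ring_nf; nlinarith [sq_nonneg (b-a)]
  calc ‖∫ t in a..b, (f' t - f' a)‖ ≤ _ := hbd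
    _ ≤ c / 2 * (b - a) ^ 2 := hval


/-- Local convergence estimates for the alternating tangent-line iteration. -/
theorem stmt_13 (U : Set ℝ) (hU : IsOpen U)
    (f g : ℝ → ℝ) (f' g' : ℝ → ℝ)
    (hf : ∀ x ∈ U, HasDerivAt f (f' x) x) (hg : ∀ x ∈ U, HasDerivAt g (g' x) x)
    (α β γ : ℝ) (hγ : 0 < γ)
    (hfLip : ∀ x ∈ U, ∀ y ∈ U, |f' x - f' y| ≤ α * |x - y|)
    (hgLip : ∀ x ∈ U, ∀ y ∈ U, |g' x - g' y| ≤ β * |x - y|)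
    (hgap : ∀ x ∈ U, γ ≤ |f' x - g' x|)
    (x : ℕ → ℝ) (hxU : ∀ k, x k ∈ U)
    (hseg : ∀ k, Set.uIcc (x k) (x (k + 1)) ⊆ U)
    (hit1 : ∀ k, f (x k) + f' (x k) * (x (k + 1) - x k) = g (x (k + 1)))
    (hit2 : ∀ k, g (x (k + 1)) + g' (x (k + 1)) * (x (k + 2) - x (k + 1)) = f (x (k + 2)))
    (Δ : ℕ → ℝ) (hΔ : ∀ k, Δ k = x (k + 1) - x k) :
    ∀ k : ℕ, 1 ≤ k →
      |Δ k| * (1 - β / 2 * |Δ k|) ≤ α / (2 * γ) * |Δ (k - 1)| ^ 2 ∧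
      |Δ (k + 1)| * (1 - α / 2 * |Δ (k + 1)|) ≤ β / (2 * γ) * |Δ k| ^ 2 := by
  -- α and β are nonnegative
  obtain ⟨ε, hε, hball⟩ := Metric.isOpen_iff.1 hU (x 0) (hxU 0)
  have htwo : x 0 + ε / 2 ∈ U := by
    apply hball
    simp only [Metric.mem_ball, Real.dist_eq]
    rw [abs_of_pos (by linarith)]
    · linarith
  have hα : 0 ≤ α := by
    have h1 := hfLip (x 0) (hxU 0) (x 0 + ε / 2) htwo
    have h2 : |x 0 - (x 0 + ε / 2)| = ε / 2 := by
      rw [abs_sub_comm]; rw [abs_of_pos (by linarith)]; ring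
    rw [h2] at h1
    nlinarith [abs_nonneg (f' (x 0) - f' (x 0 + ε / 2))]
  have hβ : 0 ≤ β := by
    have h1 := hgLip (x 0) (hxU 0) (x 0 + ε / 2) htwo
    have h2 : |x 0 - (x 0 + ε / 2)| = ε / 2 := by
      rw [abs_sub_comm]; rw [abs_of_pos (by linarith)]; ring
    rw [h2] at h1
    nlinarith [abs_nonneg (g' (x 0) - g' (x 0 + ε / 2))]
  -- key lemma: γ|Δ m| ≤ |h (x m)| for m ≥ 1
  have key : ∀ j : ℕ, γ * |x (j + 2) - x (j + 1)| ≤ |f (x (j + 1)) - g (x (j + 1))| := by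
    intro j
    set a := x (j + 1) with ha
    set b := x (j + 2) with hb
    rcases eq_or_ne b a with hba | hba
    · rw [hba]; simp
    have e1 := hit1 (j + 1)
    have e2 := hit2 j
    -- identity: (f a - g a) + (f b - g b) = -((f' a - g' a) * (b - a))
    have hid : (f a - g a) + (f b - g b) = -((f' a - g' a) * (b - a)) := by
      have e1' : f a + f' a * (b - a) = g b := e1
      have e2' : g a + g' a * (b - a) = f b := e2
      linear_combination e1' - e2'
    have hsegU : Set.uIcc a b ⊆ U := hseg (j + 1)
    have hconth : ContinuousOn (fun t => f t - g t) (Set.uIcc a b) := fun t ht =>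
      (((hf t (hsegU ht)).sub (hg t (hsegU ht))).continuousAt).continuousWithinAt
    -- MVT
    obtain ⟨ξ, hξmem, hξ⟩ : ∃ ξ ∈ Set.uIcc a b,
        (f b - g b) - (f a - g a) = (f' ξ - g' ξ) * (b - a) := by
      rcases lt_or_gt_of_ne hba with hlt | hlt
      · -- b < a
        obtain ⟨ξ, hξ, hval⟩ := exists_hasDerivAt_eq_slope (fun t => f t - g t)
          (fun t => f' t - g' t) hlt
          (hconth.mono (by rw [Set.uIcc_of_ge hlt.le]))
          (fun t ht => by
            have htU : t ∈ U := hsegU (by rw [Set.uIcc_of_ge hlt.le]; exact Set.Ioo_subset_Icc_self ht)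
            exact (hf t htU).sub (hg t htU))
        refine ⟨ξ, by rw [Set.uIcc_of_ge hlt.le]; exact Set.Ioo_subset_Icc_self hξ, ?_⟩
        rw [eq_div_iff (sub_ne_zero.2 (Ne.symm hba))] at hval
        linear_combination hval
      · -- a < b
        obtain ⟨ξ, hξ, hval⟩ := exists_hasDerivAt_eq_slope (fun t => f t - g t)
          (fun t => f' t - g' t) hlt
          (hconth.mono (by rw [Set.uIcc_of_le hlt.le]))
          (fun t ht => by
            have htU : t ∈ U := hsegU (by rw [Set.uIcc_of_le hlt.le]; exact Set.Ioo_subset_Icc_self ht)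
            exact (hf t htU).sub (hg t htU))
        refine ⟨ξ, by rw [Set.uIcc_of_le hlt.le]; exact Set.Ioo_subset_Icc_self hξ, ?_⟩
        rw [eq_div_iff (sub_ne_zero.2 hba)] at hval
        linear_combination -hval
    -- continuity of the derivative difference
    have hcd : ContinuousOn (fun t => f' t - g' t) (Set.uIcc a b) := by
      apply LipschitzOnWith.continuousOn (K := (α + β).toNNReal)
      rw [lipschitzOnWith_iff_dist_le_mul]
      intro p hp q hq
      have h1 := hfLip p (hsegU hp) q (hsegU hq)
      have h2 := hgLip p (hsegU hp) q (hsegU hq)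
      have : |f' p - g' p - (f' q - g' q)| ≤ (α + β) * |p - q| := by
        calc |f' p - g' p - (f' q - g' q)| ≤ |f' p - f' q| + |g' p - g' q| := by
              rw [show f' p - g' p - (f' q - g' q) = (f' p - f' q) - (g' p - g' q) by ring]
              exact abs_sub _ _
          _ ≤ (α + β) * |p - q| := by nlinarith [abs_nonneg (p - q)]
      rw [Real.dist_eq, Real.dist_eq, Real.coe_toNNReal (α + β) (by linarith)]
      exact this
    -- constant sign of f' - g' on the segment
    have hsign : 2 * γ ≤ |(f' a - g' a) + (f' ξ - g' ξ)| := by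
      have hgapa := hgap a (hsegU Set.left_mem_uIcc)
      have hgapξ := hgap ξ (hsegU hξmem)
      have hivt : ∀ u ∈ Set.uIcc a b, ∀ v ∈ Set.uIcc a b,
          γ ≤ f' u - g' u → γ ≤ f' v - g' v ∨ False := by
        intro u hu v hv hup
        by_contra hcon
        push_neg at hcon
        have hvn : f' v - g' v ≤ -γ := by
          rcases le_abs.1 (hgap v (hsegU hv)) with h | h
          · exact absurd h (not_le.2 (by tauto))
          · linarith
        have h0 : (0 : ℝ) ∈ Set.uIcc (f' v - g' v) (f' u - g' u) := by
          rw [Set.mem_uIcc]; left; constructor <;> linarith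
        obtain ⟨z, hz, hz0⟩ := intermediate_value_uIcc
          (hcd.mono (Set.uIcc_subset_uIcc hv hu)) h0
        have := hgap z (hsegU (Set.uIcc_subset_uIcc hv hu hz))
        have hz0' : f' z - g' z = 0 := hz0
        rw [hz0'] at this
        simp at this
        linarith
      rcases le_abs.1 hgapa with hpa | hna
      · have hξp : γ ≤ f' ξ - g' ξ := by
          rcases hivt a Set.left_mem_uIcc ξ hξmem hpa with h | h
          · exact h
          · exact absurd h not_false
        rw [abs_of_pos (by linarith)]
        linarith
      · -- f' a - g' a ≤ -γ
        have hξn : f' ξ - g' ξ ≤ -γ := by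
          by_contra hcon
          push_neg at hcon
          have hξp : γ ≤ f' ξ - g' ξ := by
            rcases le_abs.1 hgapξ with h | h
            · exact h
            · linarith
          rcases hivt ξ hξmem a Set.left_mem_uIcc hξp with h | h
          · linarith
          · exact h.elim
        rw [abs_of_neg (by linarith)]
        linarith
    -- combine: 2 (f a - g a) = -((f' a - g' a) + (f' ξ - g' ξ)) * (b - a)
    have hcomb : 2 * (f a - g a) = -(((f' a - g' a) + (f' ξ - g' ξ)) * (b - a)) := by
      linear_combination hid - hξ
    have habs : 2 * |f a - g a| = |(f' a - g' a) + (f' ξ - g' ξ)| * |b - a| := by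
      rw [← abs_mul]
      rw [show ((f' a - g' a) + (f' ξ - g' ξ)) * (b - a) = -(2 * (f a - g a)) by linear_combination hcomb]
      rw [abs_neg]
      rw [abs_mul]
      simp
    nlinarith [abs_nonneg (b - a), hsign, habs]
  -- main conclusion
  intro k hk
  obtain ⟨j, rfl⟩ : ∃ j, k = j + 1 := ⟨k - 1, (Nat.succ_pred_eq_of_pos hk).symm⟩
  have hΔj := hΔ j
  have hΔk := hΔ (j + 1)
  have hΔk1 := hΔ (j + 2)
  constructor
  · -- first inequality
    have hkey := key j
    have htay : |f (x (j + 1)) - g (x (j + 1))| ≤ α / 2 * (x (j + 1) - x j) ^ 2 := by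
      have hT := taylor_rem_bound f f' hα hf hfLip (hseg j)
      have e := hit1 j
      calc |f (x (j + 1)) - g (x (j + 1))|
          = |f (x (j + 1)) - f (x j) - f' (x j) * (x (j + 1) - x j)| := by
            rw [← e]; ring_nf
        _ ≤ α / 2 * (x (j + 1) - x j) ^ 2 := hT
    have hred : (j + 1 : ℕ) - 1 = j := rfl
    rw [hred, hΔk, hΔj]
    have h1 : |x (j + 2) - x (j + 1)| * (1 - β / 2 * |x (j + 2) - x (j + 1)|)
        ≤ |x (j + 2) - x (j + 1)| :=
      mul_le_of_le_one_right (abs_nonneg _)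
        (by nlinarith [abs_nonneg (x (j + 2) - x (j + 1))])
    have h2 : γ * |x (j + 2) - x (j + 1)| ≤ α / 2 * (x (j + 1) - x j) ^ 2 :=
      le_trans hkey htay
    have h3 : |x (j + 1) - x j| ^ 2 = (x (j + 1) - x j) ^ 2 := sq_abs _
    rw [h3]
    rw [show α / (2 * γ) * (x (j + 1) - x j) ^ 2 = (α / 2 * (x (j + 1) - x j) ^ 2) / γ by
      field_simp]
    calc |x (j + 2) - x (j + 1)| * (1 - β / 2 * |x (j + 2) - x (j + 1)|)
        ≤ |x (j + 2) - x (j + 1)| := h1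
      _ ≤ (α / 2 * (x (j + 1) - x j) ^ 2) / γ := by
          rw [le_div_iff₀ hγ]; linarith [h2]
  · -- second inequality
    have hkey := key (j + 1)
    have htay : |f (x (j + 2)) - g (x (j + 2))| ≤ β / 2 * (x (j + 2) - x (j + 1)) ^ 2 := by
      have hT := taylor_rem_bound g g' hβ hg hgLip (hseg (j + 1))
      have e := hit2 j
      calc |f (x (j + 2)) - g (x (j + 2))|
          = |g (x (j + 2)) - g (x (j + 1)) - g' (x (j + 1)) * (x (j + 2) - x (j + 1))| := by
            rw [← e, abs_sub_comm]; ring_nf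
        _ ≤ β / 2 * (x (j + 2) - x (j + 1)) ^ 2 := hT
    rw [hΔk, hΔk1]
    have h1 : |x (j + 3) - x (j + 2)| * (1 - α / 2 * |x (j + 3) - x (j + 2)|)
        ≤ |x (j + 3) - x (j + 2)| :=
      mul_le_of_le_one_right (abs_nonneg _)
        (by nlinarith [abs_nonneg (x (j + 3) - x (j + 2))])
    have h2 : γ * |x (j + 3) - x (j + 2)| ≤ β / 2 * (x (j + 2) - x (j + 1)) ^ 2 :=
      le_trans hkey htay
    have h3 : |x (j + 2) - x (j + 1)| ^ 2 = (x (j + 2) - x (j + 1)) ^ 2 := sq_abs _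
    rw [h3]
    calc |x (j + 3) - x (j + 2)| * (1 - α / 2 * |x (j + 3) - x (j + 2)|)
        ≤ |x (j + 3) - x (j + 2)| := h1
      _ ≤ β / (2 * γ) * (x (j + 2) - x (j + 1)) ^ 2 := by
          rw [show β / (2 * γ) * (x (j + 2) - x (j + 1)) ^ 2
              = (β / 2 * (x (j + 2) - x (j + 1)) ^ 2) / γ by field_simp]
          rw [le_div_iff₀ hγ]; linarith [h2]
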